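/- (Classification of vectors of type (iii) in L₆) Let c ∈ ℤ⁶ be nonzero. Then cᵀG₆⁻¹c = 1/3 and the least positive integer k with k·G₆⁻¹c ∈ ℤ⁶ equals 6 if and only if c or −c belongs to the set {(0,1,0,0,0,0), (0,0,0,0,0,1)}. -/

import Mathlib

open Matrix

/-- The Gram matrix of the even positive definite lattice `L₆` (determinant 108). -/
def G6 : Matrix (Fin 6) (Fin 6) ℚ :=
  !![4, 2, 0, 0, -2, 0;
     2, 4, 0, 0, -1, 0;
     0, 0, 2, -1, 0, 0;
     0, 0, -1, 2, 0, 0;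
     -2, -1, 0, 0, 2, 1;
     0, 0, 0, 0, 1, 4]

/-- The explicit inverse of `G6`. -/
def M6 : Matrix (Fin 6) (Fin 6) ℚ :=
  !![2/3, -1/6, 0, 0, 2/3, -1/6;
     -1/6, 1/3, 0, 0, 0, 0;
     0, 0, 2/3, 1/3, 0, 0;
     0, 0, 1/3, 2/3, 0, 0;
     2/3, 0, 0, 0, 4/3, -1/3;
     -1/6, 0, 0, 0, -1/3, 1/3]

lemma cv5 {α : Type*} (x : α) (u : Fin 5 → α) : vecCons x u 5 = u 4 := rfl
lemma cv4 {α : Type*} (x : α) (u : Fin 4 → α) : vecCons x u 4 = u 3 := rfl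
lemma cv3 {α : Type*} (x : α) (u : Fin 3 → α) : vecCons x u 3 = u 2 := rfl
lemma cv2 {α : Type*} (x : α) (u : Fin 2 → α) : vecCons x u 2 = u 1 := rfl

lemma hGinv : G6⁻¹ = M6 := by
  apply Matrix.inv_eq_right_inv
  ext i j
  fin_cases i <;> fin_cases j <;>
    norm_num [G6, M6, Matrix.mul_apply, Fin.sum_univ_succ, Matrix.one_apply,
      cv5, cv4, cv3, cv2, Matrix.vecHead, Matrix.vecTail, Fin.ext_iff]

lemma int_sq_zero (x : ℤ) (h : 3 * x ^ 2 ≤ 2) : x = 0 := by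
  have h1 : 6 * x ≤ 5 := by nlinarith [sq_nonneg (x - 1)]
  have h2 : -5 ≤ 6 * x := by nlinarith [sq_nonneg (x + 1)]
  omega

lemma int_abs_le_one (x : ℤ) (h : 3 * x ^ 2 ≤ 4) : -1 ≤ x ∧ x ≤ 1 := by
  have h1 : 6 * x ≤ 7 := by nlinarith [sq_nonneg (x - 1)]
  have h2 : -7 ≤ 6 * x := by nlinarith [sq_nonneg (x + 1)]
  omega

lemma key (a b f : ℤ) (ha : -1 ≤ a) (ha' : a ≤ 1) (hb : -1 ≤ b) (hb' : b ≤ 1)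
    (hf : -1 ≤ f) (hf' : f ≤ 1)
    (e : 4*a^2 - 2*a*b - 2*a*f + 2*b^2 + 2*f^2 = 2) :
    (a = 0 ∧ b = 1 ∧ f = 0) ∨ (a = 0 ∧ b = 0 ∧ f = 1) ∨
    (a = 0 ∧ b = -1 ∧ f = 0) ∨ (a = 0 ∧ b = 0 ∧ f = -1) := by
  have ha3 : a = -1 ∨ a = 0 ∨ a = 1 := by omega
  have hb3 : b = -1 ∨ b = 0 ∨ b = 1 := by omega
  have hf3 : f = -1 ∨ f = 0 ∨ f = 1 := by omega
  rcases ha3 with rfl|rfl|rfl <;> rcases hb3 with rfl|rfl|rfl <;>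
    rcases hf3 with rfl|rfl|rfl <;>
    first
      | (exfalso; revert e; norm_num; done)
      | (norm_num; done)

set_option maxHeartbeats 1000000 in
theorem L6_type_iii_classification (c : Fin 6 → ℤ) (hc : c ≠ 0) :
    ((fun i => (c i : ℚ)) ⬝ᵥ G6⁻¹.mulVec (fun i => (c i : ℚ)) = 1 / 3 ∧
      IsLeast {k : ℕ | 0 < k ∧
        ∀ i, ∃ m : ℤ, (k : ℚ) * G6⁻¹.mulVec (fun i => (c i : ℚ)) i = (m : ℚ)} 6) ↔
    (c = ![0, 1, 0, 0, 0, 0] ∨ c = ![0, 0, 0, 0, 0, 1] ∨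
      -c = ![0, 1, 0, 0, 0, 0] ∨ -c = ![0, 0, 0, 0, 0, 1]) := by
  rw [hGinv]
  constructor
  · rintro ⟨hnorm, -⟩
    have e0 : (4*(c 0 : ℚ)^2 - 2*(c 0 : ℚ)*(c 1 : ℚ) + 8*(c 0 : ℚ)*(c 4 : ℚ)
        - 2*(c 0 : ℚ)*(c 5 : ℚ) + 2*(c 1 : ℚ)^2 + 4*(c 2 : ℚ)^2
        + 4*(c 2 : ℚ)*(c 3 : ℚ) + 4*(c 3 : ℚ)^2 + 8*(c 4 : ℚ)^2
        - 4*(c 4 : ℚ)*(c 5 : ℚ) + 2*(c 5 : ℚ)^2) = 2 := by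
      norm_num [M6, Matrix.mulVec, dotProduct, Fin.sum_univ_succ,
        cv5, cv4, cv3, cv2, Matrix.vecHead, Matrix.vecTail] at hnorm
      simp only [show (Fin.succ (2 : Fin 5)) = (3 : Fin 6) from rfl,
        show (Fin.succ (2 : Fin 4)).succ = (4 : Fin 6) from rfl,
        show (Fin.succ (2 : Fin 3)).succ.succ = (5 : Fin 6) from rfl] at hnorm
      linear_combination 6 * hnorm
    have e : 4*(c 0)^2 - 2*(c 0)*(c 1) + 8*(c 0)*(c 4) - 2*(c 0)*(c 5)
        + 2*(c 1)^2 + 4*(c 2)^2 + 4*(c 2)*(c 3) + 4*(c 3)^2 + 8*(c 4)^2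
        - 4*(c 4)*(c 5) + 2*(c 5)^2 = 2 := by exact_mod_cast e0
    have hb0 : -1 ≤ c 0 ∧ c 0 ≤ 1 := by
      refine int_abs_le_one _ ?_
      linarith [e, sq_nonneg (2*c 1 - c 0), sq_nonneg (2*c 2 + c 3), sq_nonneg (c 3),
        sq_nonneg (4*c 4 - c 5 + 2*c 0), sq_nonneg (c 5)]
    have hb1 : -1 ≤ c 1 ∧ c 1 ≤ 1 := by
      refine int_abs_le_one _ ?_
      linarith [e, sq_nonneg (4*c 0 + 4*c 4 - c 5 - c 1), sq_nonneg (2*c 2 + c 3),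
        sq_nonneg (c 3), sq_nonneg (4*c 4 - c 5 + c 1), sq_nonneg (c 5)]
    have hb5 : -1 ≤ c 5 ∧ c 5 ≤ 1 := by
      refine int_abs_le_one _ ?_
      linarith [e, sq_nonneg (4*c 0 - c 1 + 4*c 4 - c 5), sq_nonneg (7*c 1 + 4*c 4 - c 5),
        sq_nonneg (2*c 2 + c 3), sq_nonneg (c 3), sq_nonneg (4*c 4 - c 5)]
    have hc2 : c 2 = 0 := by
      refine int_sq_zero _ ?_
      linarith [e, sq_nonneg (4*c 0 - c 1 + 4*c 4 - c 5), sq_nonneg (7*c 1 + 4*c 4 - c 5),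
        sq_nonneg (2*c 3 + c 2), sq_nonneg (4*c 4 - c 5), sq_nonneg (c 5)]
    have hc3 : c 3 = 0 := by
      refine int_sq_zero _ ?_
      linarith [e, sq_nonneg (4*c 0 - c 1 + 4*c 4 - c 5), sq_nonneg (7*c 1 + 4*c 4 - c 5),
        sq_nonneg (2*c 2 + c 3), sq_nonneg (4*c 4 - c 5), sq_nonneg (c 5)]
    have hc4 : c 4 = 0 := by
      refine int_sq_zero _ ?_
      linarith [e, sq_nonneg (4*c 0 - c 1 + 4*c 4 - c 5), sq_nonneg (7*c 1 - c 5 + 4*c 4),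
        sq_nonneg (2*c 2 + c 3), sq_nonneg (c 3), sq_nonneg (2*c 5 - c 4)]
    have e' : 4*(c 0)^2 - 2*(c 0)*(c 1) - 2*(c 0)*(c 5) + 2*(c 1)^2 + 2*(c 5)^2 = 2 := by
      linear_combination e - (4*(c 2) + 4*(c 3))*hc2 - (4*(c 3))*hc3
        - (8*(c 0) + 8*(c 4) - 4*(c 5))*hc4
    rcases key (c 0) (c 1) (c 5) hb0.1 hb0.2 hb1.1 hb1.2 hb5.1 hb5.2 e' with
      ⟨h0, h1, h5⟩ | ⟨h0, h1, h5⟩ | ⟨h0, h1, h5⟩ | ⟨h0, h1, h5⟩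
    · exact Or.inl (by funext i; fin_cases i <;> simp [h0, h1, hc2, hc3, hc4, h5, cv5, cv4, cv3, cv2])
    · exact Or.inr (Or.inl (by funext i; fin_cases i <;> simp [h0, h1, hc2, hc3, hc4, h5, cv5, cv4, cv3, cv2]))
    · exact Or.inr (Or.inr (Or.inl (by
        funext i; fin_cases i <;> simp [h0, h1, hc2, hc3, hc4, h5, cv5, cv4, cv3, cv2])))
    · exact Or.inr (Or.inr (Or.inr (by
        funext i; fin_cases i <;> simp [h0, h1, hc2, hc3, hc4, h5, cv5, cv4, cv3, cv2])))
  · intro h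
    have hc' : c = ![0, 1, 0, 0, 0, 0] ∨ c = ![0, 0, 0, 0, 0, 1] ∨
        c = ![0, -1, 0, 0, 0, 0] ∨ c = ![0, 0, 0, 0, 0, -1] := by
      rcases h with h | h | h | h
      · exact Or.inl h
      · exact Or.inr (Or.inl h)
      · refine Or.inr (Or.inr (Or.inl ?_))
        funext i
        have := congrFun h i
        fin_cases i <;> simp_all [cv5, cv4, cv3, cv2] <;> omega
      · refine Or.inr (Or.inr (Or.inr ?_))
        funext i
        have := congrFun h i
        fin_cases i <;> simp_all [cv5, cv4, cv3, cv2] <;> omega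
    rcases hc' with rfl | rfl | rfl | rfl
    · refine ⟨?_, ⟨⟨by norm_num, ?_⟩, ?_⟩⟩
      · norm_num [M6, Matrix.mulVec, dotProduct, Fin.sum_univ_succ,
          cv5, cv4, cv3, cv2, Matrix.vecHead, Matrix.vecTail]
      · intro i
        fin_cases i
        · exact ⟨-1, by norm_num [M6, Matrix.mulVec, dotProduct, Fin.sum_univ_succ,
            cv5, cv4, cv3, cv2, Matrix.vecHead, Matrix.vecTail]⟩
        · exact ⟨2, by norm_num [M6, Matrix.mulVec, dotProduct, Fin.sum_univ_succ,
            cv5, cv4, cv3, cv2, Matrix.vecHead, Matrix.vecTail]⟩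
        · exact ⟨0, by norm_num [M6, Matrix.mulVec, dotProduct, Fin.sum_univ_succ,
            cv5, cv4, cv3, cv2, Matrix.vecHead, Matrix.vecTail]⟩
        · exact ⟨0, by norm_num [M6, Matrix.mulVec, dotProduct, Fin.sum_univ_succ,
            cv5, cv4, cv3, cv2, Matrix.vecHead, Matrix.vecTail]⟩
        · exact ⟨0, by norm_num [M6, Matrix.mulVec, dotProduct, Fin.sum_univ_succ,
            cv5, cv4, cv3, cv2, Matrix.vecHead, Matrix.vecTail]⟩
        · exact ⟨0, by norm_num [M6, Matrix.mulVec, dotProduct, Fin.sum_univ_succ,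
            cv5, cv4, cv3, cv2, Matrix.vecHead, Matrix.vecTail]⟩
      · rintro k ⟨hk0, hk⟩
        obtain ⟨m, hm⟩ := hk 0
        norm_num [M6, Matrix.mulVec, dotProduct, Fin.sum_univ_succ,
          cv5, cv4, cv3, cv2, Matrix.vecHead, Matrix.vecTail] at hm
        have hkm : (k : ℤ) = -6 * m := by
          have : (k : ℚ) = -6 * m := by linarith
          exact_mod_cast this
        omega
    · refine ⟨?_, ⟨⟨by norm_num, ?_⟩, ?_⟩⟩
      · norm_num [M6, Matrix.mulVec, dotProduct, Fin.sum_univ_succ,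
          cv5, cv4, cv3, cv2, Matrix.vecHead, Matrix.vecTail]
      · intro i
        fin_cases i
        · exact ⟨-1, by norm_num [M6, Matrix.mulVec, dotProduct, Fin.sum_univ_succ,
            cv5, cv4, cv3, cv2, Matrix.vecHead, Matrix.vecTail]⟩
        · exact ⟨0, by norm_num [M6, Matrix.mulVec, dotProduct, Fin.sum_univ_succ,
            cv5, cv4, cv3, cv2, Matrix.vecHead, Matrix.vecTail]⟩
        · exact ⟨0, by norm_num [M6, Matrix.mulVec, dotProduct, Fin.sum_univ_succ,
            cv5, cv4, cv3, cv2, Matrix.vecHead, Matrix.vecTail]⟩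
        · exact ⟨0, by norm_num [M6, Matrix.mulVec, dotProduct, Fin.sum_univ_succ,
            cv5, cv4, cv3, cv2, Matrix.vecHead, Matrix.vecTail]⟩
        · exact ⟨-2, by norm_num [M6, Matrix.mulVec, dotProduct, Fin.sum_univ_succ,
            cv5, cv4, cv3, cv2, Matrix.vecHead, Matrix.vecTail]⟩
        · exact ⟨2, by norm_num [M6, Matrix.mulVec, dotProduct, Fin.sum_univ_succ,
            cv5, cv4, cv3, cv2, Matrix.vecHead, Matrix.vecTail]⟩
      · rintro k ⟨hk0, hk⟩
        obtain ⟨m, hm⟩ := hk 0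
        norm_num [M6, Matrix.mulVec, dotProduct, Fin.sum_univ_succ,
          cv5, cv4, cv3, cv2, Matrix.vecHead, Matrix.vecTail] at hm
        have hkm : (k : ℤ) = -6 * m := by
          have : (k : ℚ) = -6 * m := by linarith
          exact_mod_cast this
        omega
    · refine ⟨?_, ⟨⟨by norm_num, ?_⟩, ?_⟩⟩
      · norm_num [M6, Matrix.mulVec, dotProduct, Fin.sum_univ_succ,
          cv5, cv4, cv3, cv2, Matrix.vecHead, Matrix.vecTail]
      · intro i
        fin_cases i
        · exact ⟨1, by norm_num [M6, Matrix.mulVec, dotProduct, Fin.sum_univ_succ,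
            cv5, cv4, cv3, cv2, Matrix.vecHead, Matrix.vecTail]⟩
        · exact ⟨-2, by norm_num [M6, Matrix.mulVec, dotProduct, Fin.sum_univ_succ,
            cv5, cv4, cv3, cv2, Matrix.vecHead, Matrix.vecTail]⟩
        · exact ⟨0, by norm_num [M6, Matrix.mulVec, dotProduct, Fin.sum_univ_succ,
            cv5, cv4, cv3, cv2, Matrix.vecHead, Matrix.vecTail]⟩
        · exact ⟨0, by norm_num [M6, Matrix.mulVec, dotProduct, Fin.sum_univ_succ,
            cv5, cv4, cv3, cv2, Matrix.vecHead, Matrix.vecTail]⟩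
        · exact ⟨0, by norm_num [M6, Matrix.mulVec, dotProduct, Fin.sum_univ_succ,
            cv5, cv4, cv3, cv2, Matrix.vecHead, Matrix.vecTail]⟩
        · exact ⟨0, by norm_num [M6, Matrix.mulVec, dotProduct, Fin.sum_univ_succ,
            cv5, cv4, cv3, cv2, Matrix.vecHead, Matrix.vecTail]⟩
      · rintro k ⟨hk0, hk⟩
        obtain ⟨m, hm⟩ := hk 0
        norm_num [M6, Matrix.mulVec, dotProduct, Fin.sum_univ_succ,
          cv5, cv4, cv3, cv2, Matrix.vecHead, Matrix.vecTail] at hm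
        have hkm : (k : ℤ) = 6 * m := by
          have : (k : ℚ) = 6 * m := by linarith
          exact_mod_cast this
        omega
    · refine ⟨?_, ⟨⟨by norm_num, ?_⟩, ?_⟩⟩
      · norm_num [M6, Matrix.mulVec, dotProduct, Fin.sum_univ_succ,
          cv5, cv4, cv3, cv2, Matrix.vecHead, Matrix.vecTail]
      · intro i
        fin_cases i
        · exact ⟨1, by norm_num [M6, Matrix.mulVec, dotProduct, Fin.sum_univ_succ,
            cv5, cv4, cv3, cv2, Matrix.vecHead, Matrix.vecTail]⟩
        · exact ⟨0, by norm_num [M6, Matrix.mulVec, dotProduct, Fin.sum_univ_succ,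
            cv5, cv4, cv3, cv2, Matrix.vecHead, Matrix.vecTail]⟩
        · exact ⟨0, by norm_num [M6, Matrix.mulVec, dotProduct, Fin.sum_univ_succ,
            cv5, cv4, cv3, cv2, Matrix.vecHead, Matrix.vecTail]⟩
        · exact ⟨0, by norm_num [M6, Matrix.mulVec, dotProduct, Fin.sum_univ_succ,
            cv5, cv4, cv3, cv2, Matrix.vecHead, Matrix.vecTail]⟩
        · exact ⟨2, by norm_num [M6, Matrix.mulVec, dotProduct, Fin.sum_univ_succ,
            cv5, cv4, cv3, cv2, Matrix.vecHead, Matrix.vecTail]⟩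
        · exact ⟨-2, by norm_num [M6, Matrix.mulVec, dotProduct, Fin.sum_univ_succ,
            cv5, cv4, cv3, cv2, Matrix.vecHead, Matrix.vecTail]⟩
      · rintro k ⟨hk0, hk⟩
        obtain ⟨m, hm⟩ := hk 0
        norm_num [M6, Matrix.mulVec, dotProduct, Fin.sum_univ_succ,
          cv5, cv4, cv3, cv2, Matrix.vecHead, Matrix.vecTail] at hm
        have hkm : (k : ℤ) = 6 * m := by
          have : (k : ℚ) = 6 * m := by linarith
          exact_mod_cast this
        omega
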